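/- arXiv:1603.04320 — 6 statements merged into one kernel-verified Lean document; each statement's English description precedes it below -/
import Mathlib

section
/- Let V be a finite-dimensional vector space over ℚ, let Γ be a group and let ρ : Γ → GL(V) be a ℚ-linear representation. Let V_ℝ := ℝ ⊗_ℚ V with the induced Γ-action, and regard V as a subset of V_ℝ via v ↦ 1 ⊗ v. If the only vector of V fixed by every ρ(γ), γ ∈ Γ, is 0, then the set { v ∈ V_ℝ : ρ(γ)(v) − v ∈ V for every γ ∈ Γ } is exactly equal to V. -/
open TensorProduct

/-- Lemma 3.7 (Lemma `letorsionmono`): if a rational representation of a group `Γ` on a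
finite-dimensional `ℚ`-vector space `V` has no nonzero invariant vector, then the set of
vectors `v` of `V_ℝ = ℝ ⊗ V` with `ρ(γ)(v) - v ∈ V` for all `γ` is exactly `V`. -/
theorem stmt_0 {V : Type*} [AddCommGroup V] [Module ℚ V] [FiniteDimensional ℚ V]
    {Γ : Type*} [Group Γ] (ρ : Γ →* (V ≃ₗ[ℚ] V))
    (hinv : ∀ v : V, (∀ γ : Γ, ρ γ v = v) → v = 0) :
    {x : ℝ ⊗[ℚ] V | ∀ γ : Γ,
        ((ρ γ).toLinearMap.baseChange ℝ) x - x ∈ Set.range (fun v : V => (1 : ℝ) ⊗ₜ[ℚ] v)}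
      = Set.range (fun v : V => (1 : ℝ) ⊗ₜ[ℚ] v) := by
  classical
  have h1 : LinearIndepOn ℚ id ({(1 : ℝ)} : Set ℝ) :=
    (linearIndepOn_singleton_iff ℚ).mpr one_ne_zero
  set b := Module.Basis.extend h1 with hb
  have h1mem : (1 : ℝ) ∈ h1.extend (Set.subset_univ _) :=
    Module.Basis.subset_extend h1 rfl
  set i1 : ↥(h1.extend (Set.subset_univ _)) := ⟨(1 : ℝ), h1mem⟩ with hi1
  have hbi1 : b i1 = 1 := by rw [hb, hi1]; exact Module.Basis.extend_apply_self h1 _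
  -- The decomposition equivalence
  set Φ : ℝ ⊗[ℚ] V ≃ₗ[ℚ] (↥(h1.extend (Set.subset_univ _)) →₀ V) :=
    (TensorProduct.congr b.repr (LinearEquiv.refl ℚ V)).trans
      (finsuppScalarLeft ℚ V _) with hΦ
  have hΦtmul : ∀ (r : ℝ) (v : V) (j), Φ (r ⊗ₜ[ℚ] v) j = b.repr r j • v := by
    intro r v j
    simp [hΦ, finsuppScalarLeft_apply_tmul_apply]
  -- Φ on elements of V
  have hΦone : ∀ (v : V) (j), Φ ((1 : ℝ) ⊗ₜ[ℚ] v) j = (Finsupp.single i1 v) j := by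
    intro v j
    rw [hΦtmul]
    have : b.repr 1 = Finsupp.single i1 1 := by
      have h := b.repr_self i1
      rwa [hbi1] at h
    rw [this]
    by_cases h : j = i1
    · subst h; simp
    · simp [Finsupp.single_eq_of_ne h, Finsupp.single_eq_of_ne h]
  -- equivariance of Φ
  have hcomm : ∀ (γ : Γ) (x : ℝ ⊗[ℚ] V) (j),
      Φ (((ρ γ).toLinearMap.baseChange ℝ) x) j = ρ γ (Φ x j) := by
    intro γ x j
    induction x using TensorProduct.induction_on with
    | zero => simp
    | tmul r v => rw [LinearMap.baseChange_tmul, hΦtmul, hΦtmul]; simp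
    | add x y hx hy => simp [map_add, hx, hy, Finsupp.add_apply]
  -- characterization of the range
  have hrange : ∀ x : ℝ ⊗[ℚ] V,
      x ∈ Set.range (fun v : V => (1 : ℝ) ⊗ₜ[ℚ] v) ↔ ∀ j, j ≠ i1 → Φ x j = 0 := by
    intro x
    constructor
    · rintro ⟨v, rfl⟩ j hj
      rw [hΦone]
      exact Finsupp.single_eq_of_ne hj
    · intro h
      refine ⟨Φ x i1, ?_⟩
      apply Φ.injective
      ext j
      rw [hΦone]
      by_cases hj : j = i1
      · subst hj; simp
      · rw [Finsupp.single_eq_of_ne hj, h j hj]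
  ext x
  simp only [Set.mem_setOf_eq]
  rw [hrange x]
  constructor
  · intro h j hj
    apply hinv
    intro γ
    have h2 := (hrange _).mp (h γ) j hj
    rw [map_sub, Finsupp.sub_apply, hcomm, sub_eq_zero] at h2
    exact h2
  · intro h γ
    rw [hrange]
    intro j hj
    rw [map_sub, Finsupp.sub_apply, hcomm, h j hj, map_zero, sub_zero]
end

section
/- Let U ⊆ ℝ^m be a connected open set and let f : U → ℝ^k be a real-analytic map. If the differential df_b : ℝ^m → ℝ^k is surjective at some point b ∈ U, then the set { x ∈ U : df_x is surjective } is dense in U. -/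
open Matrix
/-- A linear map `ℝ^m → ℝ^k` is surjective iff `det (A * Aᵀ) ≠ 0` where `A` is its matrix. -/
lemma aux_surj_iff_det {m k : ℕ} (L : (Fin m → ℝ) →ₗ[ℝ] (Fin k → ℝ)) :
    Function.Surjective L ↔
      ((LinearMap.toMatrix' L) * (LinearMap.toMatrix' L)ᵀ).det ≠ 0 := by
  set A := LinearMap.toMatrix' L with hA
  have hmv : A.mulVecLin = L := by
    rw [← Matrix.toLin'_apply', hA, Matrix.toLin'_toMatrix']
  constructor
  · intro h
    have hrank : A.rank = k := by
      rw [Matrix.rank, hmv, LinearMap.range_eq_top.mpr h, finrank_top]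
      simp [Module.finrank_fintype_fun_eq_card]
    have hr2 : (A * Aᵀ).rank = k := by rw [Matrix.rank_self_mul_transpose, hrank]
    have htop : LinearMap.range (A * Aᵀ).mulVecLin = ⊤ := by
      apply Submodule.eq_top_of_finrank_eq
      rw [← Matrix.rank, hr2]
      simp [Module.finrank_fintype_fun_eq_card]
    have hsurj : Function.Surjective ((A * Aᵀ).mulVec) := by
      intro v
      obtain ⟨w, hw⟩ := LinearMap.range_eq_top.mp htop v
      exact ⟨w, hw⟩
    have hu : IsUnit (A * Aᵀ) := Matrix.mulVec_surjective_iff_isUnit.mp hsurj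
    have := (Matrix.isUnit_iff_isUnit_det _).mp hu
    exact isUnit_iff_ne_zero.mp this
  · intro hdet
    have hu : IsUnit (A * Aᵀ) :=
      (Matrix.isUnit_iff_isUnit_det _).mpr (isUnit_iff_ne_zero.mpr hdet)
    have hs : Function.Surjective ((A * Aᵀ).mulVec) :=
      Matrix.mulVec_surjective_iff_isUnit.mpr hu
    rw [← hmv]
    intro v
    obtain ⟨w, hw⟩ := hs v
    refine ⟨Aᵀ *ᵥ w, ?_⟩
    rw [Matrix.mulVecLin_apply, Matrix.mulVec_mulVec, hw]

/-- If a real-analytic map `f : U → ℝ^k` on a connected open set `U ⊆ ℝ^m` has surjective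
differential at some point of `U`, then the set of points of `U` where the differential is
surjective is dense in `U`. -/
theorem stmt_1 {m k : ℕ} {U : Set (Fin m → ℝ)} (hU : IsOpen U) (hUconn : IsConnected U)
    {f : (Fin m → ℝ) → (Fin k → ℝ)} (hf : AnalyticOnNhd ℝ f U)
    {b : Fin m → ℝ} (hb : b ∈ U) (hsurj : Function.Surjective (fderiv ℝ f b)) :
    U ⊆ closure {x | x ∈ U ∧ Function.Surjective (fderiv ℝ f x)} := by
  classical
  have hfd : AnalyticOnNhd ℝ (fderiv ℝ f) U := hf.fderiv
  set a : (Fin m → ℝ) → Fin k → Fin m → ℝ :=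
    fun x i l => fderiv ℝ f x (Pi.single l 1) i with ha
  have haA : ∀ i l, AnalyticOnNhd ℝ (fun x => a x i l) U := by
    intro i l x hx
    exact (((ContinuousLinearMap.proj (R := ℝ) (φ := fun _ : Fin k => ℝ) i).comp
      (ContinuousLinearMap.apply ℝ (Fin k → ℝ) (Pi.single l 1))).analyticAt _).comp (hfd x hx)
  set g : (Fin m → ℝ) → ℝ := fun x =>
    ∑ σ : Equiv.Perm (Fin k), ((Equiv.Perm.sign σ : ℤ) : ℝ) *
      ∏ i, (∑ l, a x (σ i) l * a x i l) with hgdef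
  have hg : AnalyticOnNhd ℝ g U := by
    apply Finset.analyticOnNhd_fun_sum
    intro σ _
    exact analyticOnNhd_const.mul <| Finset.analyticOnNhd_fun_prod _ fun i _ =>
      Finset.analyticOnNhd_fun_sum _ fun l _ => (haA (σ i) l).mul (haA i l)
  have hgdet : ∀ x, g x =
      ((LinearMap.toMatrix' ((fderiv ℝ f x) : (Fin m → ℝ) →ₗ[ℝ] (Fin k → ℝ))) *
        (LinearMap.toMatrix' ((fderiv ℝ f x) : (Fin m → ℝ) →ₗ[ℝ] (Fin k → ℝ)))ᵀ).det := by
    intro x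
    rw [Matrix.det_apply']
    refine Finset.sum_congr rfl fun σ _ => ?_
    congr 1
  have key : ∀ x, Function.Surjective (fderiv ℝ f x) ↔ g x ≠ 0 := by
    intro x
    rw [hgdet x]
    exact aux_surj_iff_det ((fderiv ℝ f x) : (Fin m → ℝ) →ₗ[ℝ] (Fin k → ℝ))
  intro x hx
  by_contra hcl
  have hW : IsOpen ((closure {x | x ∈ U ∧ Function.Surjective (fderiv ℝ f x)})ᶜ) :=
    isClosed_closure.isOpen_compl
  have hxW : x ∈ (closure {x | x ∈ U ∧ Function.Surjective (fderiv ℝ f x)})ᶜ := hcl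
  set V := (closure {x | x ∈ U ∧ Function.Surjective (fderiv ℝ f x)})ᶜ ∩ U with hV
  have hVopen : IsOpen V := hW.inter hU
  have hxV : x ∈ V := ⟨hxW, hx⟩
  have hVzero : ∀ y ∈ V, g y = 0 := by
    intro y hy
    by_contra hgy
    have hsy : Function.Surjective (fderiv ℝ f y) := (key y).mpr hgy
    exact hy.1 (subset_closure ⟨hy.2, hsy⟩)
  have hev : g =ᶠ[nhds x] 0 :=
    Filter.eventuallyEq_of_mem (hVopen.mem_nhds hxV) hVzero
  have hEq : Set.EqOn g 0 U :=
    hg.eqOn_zero_of_preconnected_of_eventuallyEq_zero hUconn.isPreconnected hx hev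
  have : g b = 0 := hEq hb
  exact ((key b).mp hsurj) this
end

section
/- Let U ⊆ ℝ^m be a connected open set, let f : U → ℝ^k be a real-analytic map, and let D ⊆ ℝ^k be a dense subset. If the differential df_b : ℝ^m → ℝ^k is surjective at some point b ∈ U, then the preimage f^{-1}(D) is dense in U. -/
/-- (Proposition `ledense` (i), abstract form.) If a real-analytic map `f : U → ℝ^k` on a
connected open set `U ⊆ ℝ^m` has surjective differential at some point of `U`, then for any
dense subset `D ⊆ ℝ^k`, the preimage `f⁻¹(D)` is dense in `U`. -/
theorem stmt_2 {m k : ℕ} {U : Set (Fin m → ℝ)} (hU : IsOpen U) (hUconn : IsConnected U)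
    {f : (Fin m → ℝ) → (Fin k → ℝ)} (hf : AnalyticOnNhd ℝ f U)
    {D : Set (Fin k → ℝ)} (hD : Dense D)
    {b : Fin m → ℝ} (hb : b ∈ U) (hsurj : Function.Surjective (fderiv ℝ f b)) :
    U ⊆ closure (U ∩ f ⁻¹' D) := by
  classical
  -- a continuous linear right inverse of `fderiv ℝ f b`
  obtain ⟨u₀, hu₀⟩ := (fderiv ℝ f b).toLinearMap.exists_rightInverse_of_surjective
    (LinearMap.range_eq_top.2 hsurj)
  set u : (Fin k → ℝ) →L[ℝ] (Fin m → ℝ) := LinearMap.toContinuousLinearMap u₀ with hu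
  -- the "determinant" function
  set g : (Fin m → ℝ) → ℝ := fun x =>
    Matrix.det (Matrix.of fun i j : Fin k => fderiv ℝ f x (u (Pi.single j 1)) i) with hg
  -- analyticity of the derivative
  have hfd : AnalyticOnNhd ℝ (fderiv ℝ f) U := hf.fderiv_of_isOpen hU
  -- entries are analytic
  have hentry : ∀ i j : Fin k,
      AnalyticOnNhd ℝ (fun x => fderiv ℝ f x (u (Pi.single j 1)) i) U := by
    intro i j x hx
    exact ((ContinuousLinearMap.proj (R := ℝ) i).analyticAt _).comp
      (((ContinuousLinearMap.apply ℝ (Fin k → ℝ) (u (Pi.single j 1))).analyticAt _).comp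
        (hfd x hx))
  -- hence `g` is analytic on `U`
  have hganal : AnalyticOnNhd ℝ g U := by
    have h1 : AnalyticOnNhd ℝ (fun x => ∑ σ : Equiv.Perm (Fin k),
        ((Equiv.Perm.sign σ : ℤ) : ℝ) * ∏ i : Fin k,
          (Matrix.of fun i j : Fin k => fderiv ℝ f x (u (Pi.single j 1)) i) (σ i) i) U := by
      apply Finset.analyticOnNhd_fun_sum
      intro σ _
      have hprod : AnalyticOnNhd ℝ (fun x => ∏ i : Fin k,
          (Matrix.of fun i j : Fin k => fderiv ℝ f x (u (Pi.single j 1)) i) (σ i) i) U := by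
        apply Finset.analyticOnNhd_fun_prod
        intro i _
        exact hentry (σ i) i
      intro x hx
      exact analyticAt_const.mul (hprod x hx)
    have heq : g = fun x => ∑ σ : Equiv.Perm (Fin k),
        ((Equiv.Perm.sign σ : ℤ) : ℝ) * ∏ i : Fin k,
          (Matrix.of fun i j : Fin k => fderiv ℝ f x (u (Pi.single j 1)) i) (σ i) i := by
      funext x
      exact Matrix.det_apply' _
    rw [heq]
    exact h1
  -- `g` relates to determinants of linear maps
  have hgdet : ∀ x, g x = LinearMap.det (((fderiv ℝ f x).comp u).toLinearMap) := by
    intro x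
    rw [hg, ← LinearMap.det_toMatrix (Pi.basisFun ℝ (Fin k))]
    congr 1
  -- `g b = 1`
  have hgb : g b = 1 := by
    rw [hgdet]
    have h2 : ((fderiv ℝ f b).comp u).toLinearMap = LinearMap.id := by
      rw [ContinuousLinearMap.toLinearMap_comp, hu, LinearMap.coe_toContinuousLinearMap, hu₀]
    rw [h2, LinearMap.det_id]
  -- if `g y ≠ 0`, then `fderiv ℝ f y` is surjective
  have hsurj' : ∀ y, g y ≠ 0 → LinearMap.range (fderiv ℝ f y : (Fin m → ℝ) →ₗ[ℝ] (Fin k → ℝ)) = ⊤ := by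
    intro y hy
    rw [hgdet] at hy
    rw [LinearMap.range_eq_top]
    have hbij := (LinearMap.equivOfDetNeZero _ hy).surjective
    intro z
    obtain ⟨w, hw⟩ := hbij z
    exact ⟨u w, hw⟩
  -- main argument
  intro x hx
  rw [mem_closure_iff_nhds]
  intro t ht
  -- find `y` near `x` in `U` with `g y ≠ 0`
  have hV : interior t ∩ U ∈ nhds x :=
    Filter.inter_mem (interior_mem_nhds.2 ht) (hU.mem_nhds hx)
  obtain ⟨y, hyt, hyU, hgy⟩ : ∃ y, y ∈ interior t ∧ y ∈ U ∧ g y ≠ 0 := by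
    by_contra h
    push_neg at h
    have hzero : g =ᶠ[nhds x] 0 := by
      filter_upwards [hV] with z hz
      exact h z hz.1 hz.2
    have h3 := hganal.eqOn_zero_of_preconnected_of_eventuallyEq_zero
      hUconn.isPreconnected hx hzero hb
    rw [hgb] at h3
    exact one_ne_zero h3
  -- at `y`, `f` is locally open
  have hopen : Filter.map f (nhds y) = nhds (f y) :=
    ((hf y hyU).hasStrictFDerivAt).map_nhds_eq_of_surj (hsurj' y hgy)
  -- `D` is frequently in `nhds (f y)`
  have hfreq : ∃ᶠ z in nhds (f y), z ∈ D :=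
    mem_closure_iff_frequently.1 (hD (f y))
  have hfreq' : ∃ᶠ w in nhds y, f w ∈ D := by
    rw [← hopen] at hfreq
    exact hfreq
  have hev : ∀ᶠ w in nhds y, w ∈ interior t ∩ U :=
    Filter.inter_mem (isOpen_interior.mem_nhds hyt) (hU.mem_nhds hyU)
  obtain ⟨w, hw1, hw2⟩ := (hfreq'.and_eventually hev).exists
  exact ⟨w, interior_subset hw2.1, hw2.2, hw1⟩
end

section
/- Let F be a homogeneous cubic polynomial in 5 variables over ℂ, and suppose there exist two distinct 3-dimensional linear subspaces W₁ ≠ W₂ of ℂ⁵ such that every first partial derivative of F vanishes at every point of W₁ and at every point of W₂. Then F is a cone, i.e. there exists a nonzero v ∈ ℂ⁵ with Σᵢ vᵢ ∂F/∂Xᵢ = 0 as a polynomial. -/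
open MvPolynomial Finset

private lemma pcomm {σ : Type*} [DecidableEq σ] (i j : σ) (F : MvPolynomial σ ℂ) :
    pderiv i (pderiv j F) = pderiv j (pderiv i F) := by
  induction F using MvPolynomial.induction_on with
  | C a => simp
  | add p q hp hq => simp [hp, hq]
  | mul_X p k hp =>
    simp only [pderiv_mul, hp, pderiv_X, Pi.single_apply, apply_ite (pderiv i), apply_ite (pderiv j), map_one, map_zero]
    split_ifs <;> subst_vars <;> simp [hp, Pi.single_apply, *] <;> ring

private lemma deg_eq (d : Fin 5 →₀ ℕ) : d.degree = ∑ i, d i :=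
  Finset.sum_subset (Finset.subset_univ _) (fun _ _ hx => Finsupp.notMem_support_iff.mp hx)

private lemma homog_pderiv {F : MvPolynomial (Fin 5) ℂ} {n : ℕ} (h : F.IsHomogeneous n)
    (i : Fin 5) : (pderiv i F).IsHomogeneous (n - 1) := by
  conv_lhs => rw [F.as_sum]
  rw [map_sum]
  apply IsHomogeneous.sum
  intro m hm
  rw [pderiv_monomial]
  rcases Nat.eq_zero_or_pos (m i) with h0 | h0
  · rw [h0]; simp only [Nat.cast_zero, mul_zero, monomial_zero]; exact isHomogeneous_zero _ _ _
  · apply isHomogeneous_monomial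
    have hdm : m.degree = n := by
      by_contra hc
      exact (mem_support_iff.mp hm) (h.coeff_eq_zero hc)
    have hle : Finsupp.single i 1 ≤ m := Finsupp.single_le_iff.mpr h0
    have hadd : (m - Finsupp.single i 1) + Finsupp.single i 1 = m := tsub_add_cancel_of_le hle
    have : (m - Finsupp.single i 1).degree + 1 = n := by
      have := congrArg Finsupp.degree hadd
      rw [deg_eq ((m - Finsupp.single i 1) + Finsupp.single i 1)] at this
      simp only [Finsupp.add_apply, Finset.sum_add_distrib, Finsupp.single_apply,
        Finset.sum_ite_eq', Finset.sum_ite_eq, Finset.mem_univ, if_true, ← deg_eq] at this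
      omega
    omega

private lemma euler {n : ℕ} {F : MvPolynomial (Fin 5) ℂ} (h : F.IsHomogeneous n) :
    ∑ i, X i * pderiv i F = (n : ℂ) • F := by
  conv_lhs => rw [F.as_sum]
  conv_rhs => rw [F.as_sum]
  rw [Finset.smul_sum]
  simp only [map_sum, Finset.mul_sum]
  rw [Finset.sum_comm]
  apply Finset.sum_congr rfl
  intro m hm
  have hdm : ∑ i, m i = n := by
    rw [← deg_eq]
    by_contra hc
    exact (mem_support_iff.mp hm) (h.coeff_eq_zero hc)
  have key : ∀ i : Fin 5, X i * pderiv i (monomial m (coeff m F)) =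
      monomial m (coeff m F * (m i : ℂ)) := by
    intro i
    rw [pderiv_monomial]
    rcases Nat.eq_zero_or_pos (m i) with h0 | h0
    · simp [h0]
    · rw [X, monomial_mul, one_mul]
      congr 1
      exact congrArg _ (by rw [add_comm]; exact tsub_add_cancel_of_le (Finsupp.single_le_iff.mpr h0))
  rw [Finset.sum_congr rfl (fun i _ => key i), ← map_sum, ← Finset.mul_sum, smul_monomial]
  rw [← Nat.cast_sum, hdm, mul_comm, smul_eq_mul]

private lemma homog0_const {P : MvPolynomial (Fin 5) ℂ} (h : P.IsHomogeneous 0)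
    (x : Fin 5 → ℂ) : eval x P = eval 0 P := by
  have hP : P = C (coeff 0 P) := by
    ext d
    rcases eq_or_ne d 0 with rfl | hd
    · simp
    · rw [h.coeff_eq_zero (fun hc => hd ((Finsupp.degree_eq_zero_iff d).mp hc)), coeff_C,
        if_neg (Ne.symm hd)]
  rw [hP]; simp

/-- The symmetric trilinear coefficient tensor of a cubic. -/
private noncomputable def TT (F : MvPolynomial (Fin 5) ℂ) (i j k : Fin 5) : ℂ :=
  eval (0 : Fin 5 → ℂ) (pderiv i (pderiv j (pderiv k F)))

private lemma TT_symm12 (F : MvPolynomial (Fin 5) ℂ) (i j k : Fin 5) :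
    TT F i j k = TT F j i k := by rw [TT, TT, pcomm]

private lemma TT_symm23 (F : MvPolynomial (Fin 5) ℂ) (i j k : Fin 5) :
    TT F i j k = TT F i k j := by rw [TT, TT, pcomm j k]

private lemma master {F : MvPolynomial (Fin 5) ℂ} (hF : F.IsHomogeneous 3)
    (k : Fin 5) (x : Fin 5 → ℂ) :
    2 * eval x (pderiv k F) = ∑ i, ∑ j, x i * x j * TT F i j k := by
  have h2 : (pderiv k F).IsHomogeneous 2 := homog_pderiv hF k
  have e2 := congrArg (eval x) (euler h2)
  simp only [map_sum, map_mul, eval_X, Nat.cast_ofNat, smul_eval] at e2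
  rw [← e2]
  apply Finset.sum_congr rfl
  intro i _
  have h1 : (pderiv i (pderiv k F)).IsHomogeneous 1 := homog_pderiv h2 i
  have e1 := congrArg (eval x) (euler h1)
  simp only [map_sum, map_mul, eval_X, Nat.cast_one, smul_eval, one_mul] at e1
  rw [← e1, Finset.mul_sum]
  apply Finset.sum_congr rfl
  intro j _
  have h0 : (pderiv j (pderiv i (pderiv k F))).IsHomogeneous 0 := homog_pderiv h1 j
  rw [homog0_const h0 x]
  rw [show TT F i j k = eval 0 (pderiv j (pderiv i (pderiv k F))) by
    rw [TT_symm12, TT]]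
  ring

/-- Associated bilinear-ish family: `bb F x y k = ∑ i j, x i * y j * TT F i j k`. -/
private noncomputable def bb (F : MvPolynomial (Fin 5) ℂ) (x y : Fin 5 → ℂ) (k : Fin 5) : ℂ :=
  ∑ i, ∑ j, x i * y j * TT F i j k

private lemma bb_add1 (F : MvPolynomial (Fin 5) ℂ) (x y z : Fin 5 → ℂ) (k : Fin 5) :
    bb F (x + y) z k = bb F x z k + bb F y z k := by
  simp only [bb, Pi.add_apply, ← Finset.sum_add_distrib]
  exact Finset.sum_congr rfl fun i _ => Finset.sum_congr rfl fun j _ => by ring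

private lemma bb_add2 (F : MvPolynomial (Fin 5) ℂ) (x y z : Fin 5 → ℂ) (k : Fin 5) :
    bb F x (y + z) k = bb F x y k + bb F x z k := by
  simp only [bb, Pi.add_apply, ← Finset.sum_add_distrib]
  exact Finset.sum_congr rfl fun i _ => Finset.sum_congr rfl fun j _ => by ring

private lemma bb_smul1 (F : MvPolynomial (Fin 5) ℂ) (t : ℂ) (x y : Fin 5 → ℂ) (k : Fin 5) :
    bb F (t • x) y k = t * bb F x y k := by
  simp only [bb, Pi.smul_apply, smul_eq_mul, Finset.mul_sum]
  exact Finset.sum_congr rfl fun i _ => Finset.sum_congr rfl fun j _ => by ring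

private lemma bb_smul2 (F : MvPolynomial (Fin 5) ℂ) (t : ℂ) (x y : Fin 5 → ℂ) (k : Fin 5) :
    bb F x (t • y) k = t * bb F x y k := by
  simp only [bb, Pi.smul_apply, smul_eq_mul, Finset.mul_sum]
  exact Finset.sum_congr rfl fun i _ => Finset.sum_congr rfl fun j _ => by ring

private lemma bb_symm (F : MvPolynomial (Fin 5) ℂ) (x y : Fin 5 → ℂ) (k : Fin 5) :
    bb F x y k = bb F y x k := by
  rw [bb, Finset.sum_comm]
  exact Finset.sum_congr rfl fun i _ => Finset.sum_congr rfl fun j _ => by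
    rw [TT_symm12]; ring

private lemma bb_rot (F : MvPolynomial (Fin 5) ℂ) (x y z : Fin 5 → ℂ) :
    ∑ k, z k * bb F x y k = ∑ k, y k * bb F x z k := by
  simp only [bb, Finset.mul_sum]
  rw [Finset.sum_comm]
  conv_rhs => rw [Finset.sum_comm]
  refine Finset.sum_congr rfl fun i _ => ?_
  rw [Finset.sum_comm]
  exact Finset.sum_congr rfl fun j _ => Finset.sum_congr rfl fun k _ => by
    rw [TT_symm23]; ring

private lemma vanish {F : MvPolynomial (Fin 5) ℂ} (hF : F.IsHomogeneous 3)
    {W : Submodule ℂ (Fin 5 → ℂ)} (hv : ∀ x ∈ W, ∀ i, eval x (pderiv i F) = 0) :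
    ∀ p ∈ W, ∀ q ∈ W, ∀ k, bb F p q k = 0 := by
  have hq : ∀ x ∈ W, ∀ k, bb F x x k = 0 := fun x hx k => by
    rw [bb, ← master hF k x, hv x hx k, mul_zero]
  intro p hp q hq' k
  have h3 := hq (p + q) (W.add_mem hp hq') k
  rw [bb_add1, bb_add2, bb_add2, hq p hp k, hq q hq' k, bb_symm F q p] at h3
  have : (2 : ℂ) * bb F p q k = 0 := by linear_combination h3
  simpa using this

/-- If a homogeneous cubic in 5 variables is singular along two distinct projective planes
(all first partial derivatives vanish on two distinct 3-dimensional linear subspaces of `ℂ⁵`),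
then it is a cone. -/
theorem stmt_5 (F : MvPolynomial (Fin 5) ℂ) (hF : F.IsHomogeneous 3)
    (W₁ W₂ : Submodule ℂ (Fin 5 → ℂ))
    (h1 : Module.finrank ℂ W₁ = 3) (h2 : Module.finrank ℂ W₂ = 3) (hne : W₁ ≠ W₂)
    (hv1 : ∀ x ∈ W₁, ∀ i, MvPolynomial.eval x (pderiv i F) = 0)
    (hv2 : ∀ x ∈ W₂, ∀ i, MvPolynomial.eval x (pderiv i F) = 0) :
    ∃ v : Fin 5 → ℂ, v ≠ 0 ∧ ∑ i, v i • pderiv i F = 0 := by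
  classical
  obtain ⟨v, e, hv0, hvW1, hvW2, hee, hdec⟩ :
      ∃ v e : Fin 5 → ℂ, v ≠ 0 ∧ v ∈ W₁ ∧ v ∈ W₂ ∧ (∑ k, v k * bb F e e k = 0) ∧
        ∀ x : Fin 5 → ℂ, ∃ a ∈ W₁, ∃ b ∈ W₂, ∃ t : ℂ, x = a + b + t • e := by
    have hdim : Module.finrank ℂ ↥(W₁ ⊔ W₂) + Module.finrank ℂ ↥(W₁ ⊓ W₂) = 6 := by
      rw [Submodule.finrank_sup_add_finrank_inf_eq, h1, h2]
    have hW1S : W₁ < W₁ ⊔ W₂ := by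
      refine lt_of_le_of_ne le_sup_left fun h => hne ?_
      have h21 : W₂ < W₁ ∨ W₂ = W₁ :=
        (lt_or_eq_of_le (h ▸ le_sup_right : W₂ ≤ W₁))
      rcases h21 with h21 | h21
      · have := Submodule.finrank_lt_finrank_of_lt h21
        rw [h1, h2] at this; omega
      · exact h21.symm
    have hS4 : 3 < Module.finrank ℂ ↥(W₁ ⊔ W₂) := by
      have := Submodule.finrank_lt_finrank_of_lt hW1S
      rwa [h1] at this
    by_cases htop : W₁ ⊔ W₂ = ⊤
    · have hU : Module.finrank ℂ ↥(W₁ ⊓ W₂) ≠ 0 := by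
        rw [htop, finrank_top, Module.finrank_fin_fun] at hdim; omega
      have hUb : W₁ ⊓ W₂ ≠ ⊥ := fun hb => hU (by rw [hb, finrank_bot])
      obtain ⟨v, hvU, hv0⟩ := (Submodule.ne_bot_iff _).mp hUb
      refine ⟨v, 0, hv0, hvU.1, hvU.2, by simp [bb], fun x => ?_⟩
      have hx : x ∈ W₁ ⊔ W₂ := htop ▸ Submodule.mem_top
      obtain ⟨a, ha, b, hb, hab⟩ := Submodule.mem_sup.mp hx
      exact ⟨a, ha, b, hb, 0, by rw [← hab]; simp⟩
    · have hSlt : Module.finrank ℂ ↥(W₁ ⊔ W₂) < 5 := by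
        have := Submodule.finrank_lt htop
        rwa [Module.finrank_fin_fun] at this
      obtain ⟨e, he⟩ : ∃ e, e ∉ W₁ ⊔ W₂ := by
        by_contra h; push_neg at h; exact htop (Submodule.eq_top_iff'.mpr h)
      have he0 : e ≠ 0 := fun h => he (h ▸ Submodule.zero_mem _)
      set φ : (Fin 5 → ℂ) →ₗ[ℂ] ℂ := ∑ k, bb F e e k • LinearMap.proj k with hφ
      have hφapp : ∀ w, φ w = ∑ k, bb F e e k * w k := fun w => by
        simp [hφ, LinearMap.sum_apply, LinearMap.smul_apply, LinearMap.proj_apply,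
          smul_eq_mul]
      have hker : 4 ≤ Module.finrank ℂ (LinearMap.ker φ) := by
        have h5 := LinearMap.finrank_range_add_finrank_ker φ
        rw [Module.finrank_fin_fun] at h5
        have hr : Module.finrank ℂ (LinearMap.range φ) ≤ 1 := by
          have := Submodule.finrank_le (LinearMap.range φ)
          rwa [Module.finrank_self] at this
        omega
      have hK : (W₁ ⊓ W₂) ⊓ LinearMap.ker φ ≠ ⊥ := by
        intro hb
        have hsum := Submodule.finrank_sup_add_finrank_inf_eq (W₁ ⊓ W₂) (LinearMap.ker φ)
        rw [hb, finrank_bot, add_zero] at hsum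
        have hle : Module.finrank ℂ ↥((W₁ ⊓ W₂) ⊔ LinearMap.ker φ) ≤ 5 := by
          have := Submodule.finrank_le ((W₁ ⊓ W₂) ⊔ LinearMap.ker φ)
          rwa [Module.finrank_fin_fun] at this
        omega
      obtain ⟨v, hvK, hv0⟩ := (Submodule.ne_bot_iff _).mp hK
      refine ⟨v, e, hv0, hvK.1.1, hvK.1.2, ?_, ?_⟩
      · have h0 : ∑ k, bb F e e k * v k = 0 := by
          rw [← hφapp v]; exact LinearMap.mem_ker.mp hvK.2
        calc ∑ k, v k * bb F e e k = ∑ k, bb F e e k * v k :=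
              Finset.sum_congr rfl fun k _ => mul_comm _ _
          _ = 0 := h0
      · have hspan : (W₁ ⊔ W₂) ⊔ (ℂ ∙ e) = ⊤ := by
          apply Submodule.eq_top_of_finrank_eq
          have hinf : (W₁ ⊔ W₂) ⊓ (ℂ ∙ e) = ⊥ := by
            rw [eq_bot_iff]
            intro x hx
            obtain ⟨t, ht⟩ := Submodule.mem_span_singleton.mp hx.2
            rcases eq_or_ne t 0 with rfl | ht0
            · rw [← ht, zero_smul]; exact Submodule.zero_mem ⊥
            · exact absurd (by
                have : e = t⁻¹ • x := by rw [← ht, smul_smul, inv_mul_cancel₀ ht0, one_smul]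
                rw [this]; exact Submodule.smul_mem _ _ hx.1) he
          have hs := Submodule.finrank_sup_add_finrank_inf_eq (W₁ ⊔ W₂) (ℂ ∙ e)
          rw [hinf, finrank_bot, add_zero, finrank_span_singleton he0] at hs
          rw [Module.finrank_fin_fun]
          omega
        intro x
        have hx : x ∈ (W₁ ⊔ W₂) ⊔ (ℂ ∙ e) := hspan ▸ Submodule.mem_top
        obtain ⟨s, hs, w, hw, hsw⟩ := Submodule.mem_sup.mp hx
        obtain ⟨a, ha, b, hb, hab⟩ := Submodule.mem_sup.mp hs
        obtain ⟨t, ht⟩ := Submodule.mem_span_singleton.mp hw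
        exact ⟨a, ha, b, hb, t, by rw [← hsw, ← hab, ← ht]⟩
  refine ⟨v, hv0, ?_⟩
  apply MvPolynomial.funext
  intro x
  rw [map_zero]
  obtain ⟨a, ha, b, hb, t, hx⟩ := hdec x
  have Sav : ∀ k, bb F a v k = 0 := fun k => vanish hF hv1 a ha v hvW1 k
  have Sbv : ∀ k, bb F b v k = 0 := fun k => vanish hF hv2 b hb v hvW2 k
  have hbb : ∀ k, bb F x x k = 2 * eval x (pderiv k F) := fun k => by
    rw [bb]; exact (master hF k x).symm
  have expand : ∀ k, bb F x x k =
      bb F a a k + bb F a b k + bb F b a k + bb F b b k +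
      2 * t * bb F a e k + 2 * t * bb F b e k + t * t * bb F e e k := by
    intro k
    rw [hx]
    simp only [bb_add1, bb_add2, bb_smul1, bb_smul2]
    rw [bb_symm F e a, bb_symm F e b]
    ring
  have key : ∑ k, v k * bb F x x k = 0 := by
    calc ∑ k, v k * bb F x x k
        = ∑ k, (v k * bb F a a k + v k * bb F a b k + v k * bb F b a k + v k * bb F b b k
          + (2 * t) * (v k * bb F a e k) + (2 * t) * (v k * bb F b e k)
          + (t * t) * (v k * bb F e e k)) :=
          Finset.sum_congr rfl fun k _ => by rw [expand k]; ring
      _ = 0 := by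
          simp only [Finset.sum_add_distrib, ← Finset.mul_sum]
          rw [bb_rot F a a v, bb_rot F a b v, bb_rot F b a v, bb_rot F b b v,
            bb_rot F a e v, bb_rot F b e v, hee]
          simp [Sav, Sbv]
  have h2sum : (2 : ℂ) * ∑ k, v k * eval x (pderiv k F) = 0 := by
    calc (2 : ℂ) * ∑ k, v k * eval x (pderiv k F)
        = ∑ k, v k * bb F x x k := by
          rw [Finset.mul_sum]
          exact Finset.sum_congr rfl fun k _ => by rw [hbb k]; ring
      _ = 0 := key
  have hfin : ∑ k, v k * eval x (pderiv k F) = 0 :=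
    (mul_eq_zero.mp h2sum).resolve_left two_ne_zero
  rw [map_sum]
  simpa only [smul_eval] using hfin
end

section
/- Let F be a homogeneous cubic polynomial in 5 variables over ℂ and let W ⊆ ℂ⁵ be a 3-dimensional linear subspace such that every first partial derivative ∂F/∂Xᵢ vanishes at every point of W. Then for every v ∈ ℂ⁵ the quadric ∂_v F = Σᵢ vᵢ ∂F/∂Xᵢ is a degenerate quadratic form. -/
open MvPolynomial

noncomputable def liftPoly (w w' : Fin 5 → ℂ) :
    MvPolynomial (Fin 5) ℂ →+* Polynomial ℂ :=
  MvPolynomial.eval₂Hom Polynomial.C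
    (fun i => Polynomial.C (w' i) + Polynomial.C (w i) * Polynomial.X)

lemma liftPoly_X (w w' : Fin 5 → ℂ) (i : Fin 5) :
    liftPoly w w' (X i) = Polynomial.C (w' i) + Polynomial.C (w i) * Polynomial.X :=
  eval₂Hom_X' _ _ _

lemma eval_liftPoly (w w' : Fin 5 → ℂ) (t : ℂ) (q : MvPolynomial (Fin 5) ℂ) :
    (liftPoly w w' q).eval t = MvPolynomial.eval (w' + t • w) q := by
  induction q using MvPolynomial.induction_on with
  | C a => simp [liftPoly]
  | add p q hp hq => simp only [map_add, Polynomial.eval_add, hp, hq]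
  | mul_X p i hp =>
      simp only [map_mul, Polynomial.eval_mul, hp, liftPoly_X,
        Polynomial.eval_add, Polynomial.eval_mul, Polynomial.eval_C, Polynomial.eval_X,
        MvPolynomial.eval_X, Pi.add_apply, Pi.smul_apply, smul_eq_mul]
      ring

lemma derivative_liftPoly (w w' : Fin 5 → ℂ) (q : MvPolynomial (Fin 5) ℂ) :
    (liftPoly w w' q).derivative
      = ∑ j, Polynomial.C (w j) * liftPoly w w' (pderiv j q) := by
  induction q using MvPolynomial.induction_on with
  | C a => simp [liftPoly]
  | add p q hp hq =>
      simp only [map_add, hp, hq, mul_add, Finset.sum_add_distrib]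
  | mul_X p i hp =>
      simp only [map_mul, Polynomial.derivative_mul, hp, pderiv_mul, pderiv_X, map_add,
        mul_add]
      rw [Finset.sum_add_distrib]
      congr 1
      · rw [Finset.sum_mul]
        refine Finset.sum_congr rfl fun j _ => by ring
      · have h1 : ∀ j : Fin 5,
            Polynomial.C (w j) * ((liftPoly w w') p * (liftPoly w w') (Pi.single (M := fun _ => MvPolynomial (Fin 5) ℂ) j 1 i))
              = if j = i then Polynomial.C (w j) * liftPoly w w' p else 0 := by
          intro j
          rcases eq_or_ne j i with rfl | h
          · rw [Pi.single_eq_same, if_pos rfl, map_one, mul_one]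
          · rw [Pi.single_eq_of_ne h.symm, if_neg h, map_zero, mul_zero, mul_zero]
        rw [Finset.sum_congr rfl fun j _ => h1 j, Finset.sum_ite_eq']
        simp [liftPoly_X, mul_add]
        ring

lemma polar (W : Submodule ℂ (Fin 5 → ℂ)) (q : MvPolynomial (Fin 5) ℂ)
    (hq : ∀ x ∈ W, MvPolynomial.eval x q = 0) {w w' : Fin 5 → ℂ}
    (hw : w ∈ W) (hw' : w' ∈ W) :
    ∑ j, w j * MvPolynomial.eval w' (pderiv j q) = 0 := by
  have h0 : liftPoly w w' q = 0 := by
    apply Polynomial.funext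
    intro t
    rw [eval_liftPoly, Polynomial.eval_zero]
    exact hq _ (W.add_mem hw' (W.smul_mem t hw))
  have hd := derivative_liftPoly w w' q
  rw [h0, Polynomial.derivative_zero] at hd
  have := congrArg (Polynomial.eval 0) hd
  simp only [Polynomial.eval_zero, Polynomial.eval_finset_sum, Polynomial.eval_mul,
    Polynomial.eval_C, eval_liftPoly, zero_smul, add_zero] at this
  exact this.symm

lemma degree_one_rep (d : Fin 5 →₀ ℕ) (h : Finsupp.degree d = 1) :
    ∃ k, d = Finsupp.single k 1 := by
  have hne : d.support.Nonempty := by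
    rcases Finset.eq_empty_or_nonempty d.support with he | hne
    · exfalso; rw [Finsupp.support_eq_empty.mp he] at h; simp at h
    · exact hne
  obtain ⟨k, hk⟩ := hne
  have hdk : d k = 1 := by
    have h1 : 1 ≤ d k := Nat.one_le_iff_ne_zero.mpr (Finsupp.mem_support_iff.mp hk)
    have h2 := Finsupp.le_degree k d
    omega
  refine ⟨k, Finsupp.ext fun j => ?_⟩
  rcases eq_or_ne j k with rfl | hjk
  · simp [hdk]
  · rw [Finsupp.single_eq_of_ne' hjk.symm]
    by_contra hj
    have hjs : j ∈ d.support := Finsupp.mem_support_iff.mpr hj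
    have hsub : {j, k} ⊆ d.support := by
      intro x hx
      simp only [Finset.mem_insert, Finset.mem_singleton] at hx
      rcases hx with rfl | rfl <;> assumption
    have : d j + d k ≤ Finsupp.degree d := by
      rw [Finsupp.degree, ← Finset.sum_pair hjk]
      exact Finset.sum_le_sum_of_subset hsub
    omega

lemma eval_of_homog_one (p : MvPolynomial (Fin 5) ℂ) (hp : p.IsHomogeneous 1)
    (x : Fin 5 → ℂ) :
    MvPolynomial.eval x p = ∑ k, MvPolynomial.coeff (Finsupp.single k 1) p * x k := by
  have hdeg : ∀ d ∈ p.support, ∃ k, d = Finsupp.single k 1 := by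
    intro d hd
    apply degree_one_rep
    have := hp (MvPolynomial.mem_support_iff.mp hd)
    rwa [Finsupp.degree_eq_weight_one]
  rw [MvPolynomial.eval_eq']
  have hsub : p.support ⊆ Finset.univ.image fun k => Finsupp.single k 1 := by
    intro d hd
    obtain ⟨k, rfl⟩ := hdeg d hd
    exact Finset.mem_image.mpr ⟨k, Finset.mem_univ k, rfl⟩
  have hzero : ∀ d ∈ Finset.univ.image fun k => (Finsupp.single k 1 : Fin 5 →₀ ℕ),
      d ∉ p.support → MvPolynomial.coeff d p * ∏ i, x i ^ d i = 0 := by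
    intro d _ hd
    rw [MvPolynomial.notMem_support_iff.mp hd, zero_mul]
  rw [Finset.sum_subset hsub hzero]
  rw [Finset.sum_image (fun a _ b _ h => by
    simpa using (Finsupp.single_left_injective one_ne_zero) h)]
  refine Finset.sum_congr rfl fun k _ => ?_
  congr 1
  have : ∀ i : Fin 5, x i ^ (Finsupp.single k 1 i) = if i = k then x i else 1 := by
    intro i
    rcases eq_or_ne i k with rfl | h
    · simp
    · simp [Finsupp.single_eq_of_ne' (Ne.symm h), h]
  rw [Finset.prod_congr rfl fun i _ => this i, Finset.prod_ite_eq' Finset.univ k]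
  simp

lemma degree_add' (a b : Fin 5 →₀ ℕ) :
    Finsupp.degree (a + b) = Finsupp.degree a + Finsupp.degree b := by
  simp only [Finsupp.degree_eq_weight_one, map_add]

lemma isHomog_pderiv (p : MvPolynomial (Fin 5) ℂ) (n : ℕ) (i : Fin 5)
    (hp : p.IsHomogeneous (n + 1)) : (pderiv i p).IsHomogeneous n := by
  have hsum : pderiv i p = ∑ d ∈ p.support,
      pderiv i (MvPolynomial.monomial d (MvPolynomial.coeff d p)) := by
    conv_lhs => rw [← MvPolynomial.support_sum_monomial_coeff p]
    exact map_sum _ _ _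
  rw [hsum]
  apply MvPolynomial.IsHomogeneous.sum
  intro d hd
  rw [pderiv_monomial]
  by_cases h0 : d i = 0
  · rw [h0]
    simp only [Nat.cast_zero, mul_zero, MvPolynomial.monomial_zero]
    exact MvPolynomial.isHomogeneous_zero _ _ _
  · apply MvPolynomial.isHomogeneous_monomial
    have hdd : Finsupp.degree d = n + 1 := by
      have := hp (MvPolynomial.mem_support_iff.mp hd)
      rwa [Finsupp.degree_eq_weight_one]
    have hle : Finsupp.single i 1 ≤ d := Finsupp.single_le_iff.mpr (by omega)
    have hadd := tsub_add_cancel_of_le hle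
    have := congrArg Finsupp.degree hadd
    rw [degree_add', hdd] at this
    have hds : Finsupp.degree (Finsupp.single i (1 : ℕ)) = 1 := by
      simp [Finsupp.degree_single]
    omega

/-- If all first partial derivatives of a homogeneous cubic `F` in 5 variables vanish on a
3-dimensional linear subspace `W ⊆ ℂ⁵`, then every directional derivative `∂_v F` is a
degenerate quadratic form. -/
theorem stmt_7 (F : MvPolynomial (Fin 5) ℂ) (hF : F.IsHomogeneous 3)
    (W : Submodule ℂ (Fin 5 → ℂ)) (hW : Module.finrank ℂ W = 3)
    (hv : ∀ x ∈ W, ∀ i, MvPolynomial.eval x (pderiv i F) = 0) :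
    ∀ v : Fin 5 → ℂ, ∃ w : Fin 5 → ℂ, w ≠ 0 ∧
      ∑ j, w j • pderiv j (∑ i, v i • pderiv i F) = 0 := by
  intro v
  set G : MvPolynomial (Fin 5) ℂ := ∑ i, v i • pderiv i F with hGdef
  have hGW : ∀ x ∈ W, MvPolynomial.eval x G = 0 := by
    intro x hx
    rw [hGdef, map_sum]
    refine Finset.sum_eq_zero fun i _ => ?_
    rw [MvPolynomial.smul_eq_C_mul, map_mul, hv x hx i, mul_zero]
  have hG2 : G.IsHomogeneous 2 := by
    rw [hGdef]
    apply MvPolynomial.IsHomogeneous.sum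
    intro i _
    have h1 := isHomog_pderiv F 2 i hF
    rw [← MvPolynomial.mem_homogeneousSubmodule] at h1 ⊢
    exact Submodule.smul_mem _ _ h1
  set A : Matrix (Fin 5) (Fin 5) ℂ :=
    Matrix.of fun j k => MvPolynomial.coeff (Finsupp.single k 1) (pderiv j G) with hA
  have hrep : ∀ (j : Fin 5) (x : Fin 5 → ℂ),
      MvPolynomial.eval x (pderiv j G) = ∑ k, A j k * x k := fun j x =>
    eval_of_homog_one _ (isHomog_pderiv G 1 j hG2) x
  have hswap : ∀ w x : Fin 5 → ℂ,
      ∑ j, w j * (∑ k, A j k * x k) = ∑ k, (Matrix.vecMul w A) k * x k := by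
    intro w x
    simp only [Matrix.vecMul, dotProduct, Finset.sum_mul, Finset.mul_sum]
    rw [Finset.sum_comm]
    exact Finset.sum_congr rfl fun k _ => Finset.sum_congr rfl fun j _ => by ring
  have hpair : ∀ w ∈ W, ∀ x ∈ W, ∑ k, (Matrix.vecMul w A) k * x k = 0 := by
    intro w hw x hx
    rw [← hswap]
    rw [← Finset.sum_congr rfl fun j (_ : j ∈ Finset.univ) => congrArg (w j * ·) (hrep j x)]
    exact polar W G hGW hw hx
  let e : (Fin 5 → ℂ) →ₗ[ℂ] Module.Dual ℂ (Fin 5 → ℂ) :=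
    LinearMap.mk₂ ℂ (fun y x => ∑ k, y k * x k)
      (fun m₁ m₂ n => by simp [add_mul, Finset.sum_add_distrib])
      (fun c m n => by simp [Finset.mul_sum, mul_assoc])
      (fun m n₁ n₂ => by simp [mul_add, Finset.sum_add_distrib])
      (fun c m n => by
        simp only [Pi.smul_apply, smul_eq_mul, Finset.mul_sum]
        exact Finset.sum_congr rfl fun k _ => by ring)
  let Θ : W →ₗ[ℂ] Module.Dual ℂ (Fin 5 → ℂ) := e ∘ₗ A.vecMulLinear ∘ₗ W.subtype
  have hmem : ∀ u : W, Θ u ∈ W.dualAnnihilator := by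
    intro u
    rw [Submodule.mem_dualAnnihilator]
    intro x hx
    exact hpair (u : Fin 5 → ℂ) u.2 x hx
  let Θ' := Θ.codRestrict W.dualAnnihilator hmem
  have h5 : Module.finrank ℂ (Fin 5 → ℂ) = 5 := by
    simp [Module.finrank_fintype_fun_eq_card]
  have hqW := Submodule.finrank_quotient_add_finrank W
  have hann : Module.finrank ℂ W.dualAnnihilator = 2 := by
    rw [← LinearEquiv.finrank_eq (Subspace.quotEquivAnnihilator W)]
    omega
  have hni : ¬ Function.Injective Θ' := by
    intro hinj
    have := LinearMap.finrank_le_finrank_of_injective hinj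
    rw [hW, hann] at this
    omega
  obtain ⟨a, b, hab, hne⟩ := Function.not_injective_iff.mp hni
  have hΘ : Θ (a - b) = 0 := by
    have h1 : Θ' (a - b) = 0 := by rw [map_sub, hab, sub_self]
    have h2 := congrArg Subtype.val h1
    simpa [Θ'] using h2
  have hz : Matrix.vecMul (((a - b : W) : Fin 5 → ℂ)) A = 0 := by
    funext k
    have h3 := congrFun (congrArg (fun φ : Module.Dual ℂ (Fin 5 → ℂ) => ⇑φ) hΘ)
      (Pi.single k 1)
    simp only [Θ, e, LinearMap.comp_apply, Submodule.subtype_apply,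
      Matrix.vecMulLinear_apply, LinearMap.mk₂_apply, LinearMap.zero_apply,
      Pi.zero_apply] at h3
    have hcong : ∀ j ∈ Finset.univ,
        Matrix.vecMul (((a - b : W) : Fin 5 → ℂ)) A j * Pi.single (M := fun _ => ℂ) k 1 j
          = if j = k then Matrix.vecMul (((a - b : W) : Fin 5 → ℂ)) A j else 0 := by
      intro j _
      rw [Pi.single_apply]
      rcases eq_or_ne j k with rfl | h
      · rw [if_pos rfl, if_pos rfl, mul_one]
      · rw [if_neg h, if_neg h, mul_zero]
    rw [Finset.sum_congr rfl hcong, Finset.sum_ite_eq' Finset.univ k] at h3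
    simpa using h3
  refine ⟨((a - b : W) : Fin 5 → ℂ), ?_, ?_⟩
  · simpa [sub_ne_zero] using sub_ne_zero.mpr hne
  · apply MvPolynomial.funext
    intro x
    rw [map_zero, map_sum]
    calc ∑ j, MvPolynomial.eval x (((a - b : W) : Fin 5 → ℂ) j • pderiv j G)
        = ∑ j, ((a - b : W) : Fin 5 → ℂ) j * MvPolynomial.eval x (pderiv j G) := by
          refine Finset.sum_congr rfl fun j _ => ?_
          rw [MvPolynomial.smul_eq_C_mul, map_mul, MvPolynomial.eval_C]
      _ = ∑ j, ((a - b : W) : Fin 5 → ℂ) j * ∑ k, A j k * x k := by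
          refine Finset.sum_congr rfl fun j _ => by rw [hrep]
      _ = ∑ k, (Matrix.vecMul (((a - b : W) : Fin 5 → ℂ)) A) k * x k := hswap _ _
      _ = 0 := by rw [hz]; simp
end

section
/- Let V ⊆ ℂ^n be an open set and let f, f₁, …, f_{2n} : V → ℂ be holomorphic functions such that at every point b ∈ V the complex differentials df₁(b), …, df_{2n}(b) are linearly independent over ℝ (as real-linear functionals on ℂ^n), and let a = (a₁, …, a_{2n}) : V → ℝ^{2n} be the unique map with real values such that df(b) = Σᵢ aᵢ(b)·dfᵢ(b) for every b ∈ V. Then for every b ∈ V, the kernel of the real derivative da_b : ℂ^n → ℝ^{2n} is stable under multiplication by i, i.e. it is a complex linear subspace of ℂ^n. -/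
open ContinuousLinearMap in
/-- Key line lemma: differentiating `df = Σ aᵢ dfᵢ` along the complex line `z ↦ b + z•u`
in the real directions `1` and `I` yields the diagonal relation
`Σᵢ (da_b(I•u))ᵢ dfᵢ(b)(u) = I · Σᵢ (da_b u)ᵢ dfᵢ(b)(u)`. -/
lemma stmt_10_key {n : ℕ} {V : Set (Fin n → ℂ)} (hV : IsOpen V)
    (f : (Fin n → ℂ) → ℂ) (fi : Fin (2 * n) → (Fin n → ℂ) → ℂ)
    (hf : DifferentiableOn ℂ f V) (hfi : ∀ i, DifferentiableOn ℂ (fi i) V)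
    (a : (Fin n → ℂ) → Fin (2 * n) → ℝ)
    (ha : ∀ b ∈ V, fderiv ℂ f b = ∑ i, ((a b i : ℂ) • fderiv ℂ (fi i) b))
    {b : Fin n → ℂ} (hb : b ∈ V) (hdiff : DifferentiableAt ℝ a b) (u : Fin n → ℂ) :
    ∑ i, ((fderiv ℝ a b (Complex.I • u) i : ℂ)) * fderiv ℂ (fi i) b u
      = Complex.I * ∑ i, ((fderiv ℝ a b u i : ℂ)) * fderiv ℂ (fi i) b u := by
  classical
  set γ : ℂ → (Fin n → ℂ) := fun z => b + z • u with hγdef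
  have hγd : ∀ z : ℂ, HasDerivAt γ u z := by
    intro z
    have h1 : HasDerivAt (fun z : ℂ => z • u) ((1 : ℂ) • u) z :=
      (hasDerivAt_id z).smul_const u
    simpa [γ, one_smul] using h1.const_add b
  have hγ0 : γ 0 = b := by simp [γ]
  have hγc : Continuous γ :=
    continuous_const.add (continuous_id.smul continuous_const)
  set Ω : Set ℂ := γ ⁻¹' V with hΩdef
  have hΩo : IsOpen Ω := hV.preimage hγc
  have h0Ω : (0 : ℂ) ∈ Ω := by
    simp only [Ω, Set.mem_preimage, hγ0]; exact hb
  set ψ : ℂ → ℂ := fun z => fderiv ℂ f (γ z) u with hψdef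
  set ψi : Fin (2 * n) → ℂ → ℂ := fun i z => fderiv ℂ (fi i) (γ z) u with hψidef
  -- derivative of compositions along the line
  have hcomp : ∀ g : (Fin n → ℂ) → ℂ, DifferentiableOn ℂ g V →
      ∀ z ∈ Ω, HasDerivAt (g ∘ γ) (fderiv ℂ g (γ z) u) z := by
    intro g hg z hz
    exact ((hg.differentiableAt (hV.mem_nhds hz)).hasFDerivAt).comp_hasDerivAt z (hγd z)
  -- complex differentiability of the derivative along the line (one-variable analyticity)
  have hcd : ∀ g : (Fin n → ℂ) → ℂ, DifferentiableOn ℂ g V →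
      DifferentiableAt ℂ (fun z => fderiv ℂ g (γ z) u) 0 := by
    intro g hg
    have hder := hcomp g hg
    have hcompd : DifferentiableOn ℂ (g ∘ γ) Ω := fun z hz =>
      ((hder z hz).differentiableAt).differentiableWithinAt
    have han : AnalyticOnNhd ℂ (g ∘ γ) Ω := hcompd.analyticOnNhd hΩo
    have hEv : (fun z => fderiv ℂ g (γ z) u) =ᶠ[nhds (0 : ℂ)] deriv (g ∘ γ) := by
      filter_upwards [hΩo.mem_nhds h0Ω] with z hz
      exact ((hder z hz).deriv).symm
    exact hEv.differentiableAt_iff.mpr ((han.deriv 0 h0Ω).differentiableAt)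
  have hψd : DifferentiableAt ℂ ψ 0 := hcd f hf
  have hψid : ∀ i, DifferentiableAt ℂ (ψi i) 0 := fun i => hcd (fi i) (hfi i)
  -- real derivative of z ↦ a (γ z)
  have hγR : HasFDerivAt γ
      (((1 : ℂ →L[ℂ] ℂ).smulRight u).restrictScalars ℝ) 0 :=
    ((hγd 0).hasFDerivAt).restrictScalars ℝ
  set A : ℂ →L[ℝ] (Fin (2 * n) → ℝ) :=
    (fderiv ℝ a b).comp (((1 : ℂ →L[ℂ] ℂ).smulRight u).restrictScalars ℝ) with hAdef
  have hab : HasFDerivAt a (fderiv ℝ a b) (γ 0) := by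
    rw [hγ0]; exact hdiff.hasFDerivAt
  have hα : HasFDerivAt (fun z => a (γ z)) A 0 := hab.comp 0 hγR
  have hAapp : ∀ t : ℂ, A t = fderiv ℝ a b (t • u) := by
    intro t; simp [A]
  -- coefficient functions
  have hgi : ∀ i, HasFDerivAt (fun z => ((a (γ z) i : ℝ) : ℂ))
      (Complex.ofRealCLM.comp ((ContinuousLinearMap.proj i).comp A)) 0 := by
    intro i
    exact Complex.ofRealCLM.hasFDerivAt.comp 0
      (((ContinuousLinearMap.proj i (R := ℝ) (φ := fun _ : Fin (2 * n) => ℝ)).hasFDerivAt).comp 0 hα)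
  set D : ℂ →L[ℝ] ℂ := ∑ i, (((a b i : ℂ)) • ((fderiv ℂ (ψi i) 0).restrictScalars ℝ) +
      (ψi i 0) • (Complex.ofRealCLM.comp ((ContinuousLinearMap.proj i).comp A))) with hDdef
  have hsum : HasFDerivAt (fun z => ∑ i, ((a (γ z) i : ℂ)) * ψi i z) D 0 := by
    apply HasFDerivAt.fun_sum
    intro i _
    have h2 : HasFDerivAt (ψi i) ((fderiv ℂ (ψi i) 0).restrictScalars ℝ) 0 :=
      ((hψid i).hasFDerivAt).restrictScalars ℝ
    simpa only [hγ0] using (hgi i).fun_mul h2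
  have hEq : ψ =ᶠ[nhds (0 : ℂ)] fun z => ∑ i, ((a (γ z) i : ℂ)) * ψi i z := by
    filter_upwards [hΩo.mem_nhds h0Ω] with z hz
    have h := ha (γ z) hz
    calc ψ z = fderiv ℂ f (γ z) u := rfl
      _ = (∑ i, ((a (γ z) i : ℂ) • fderiv ℂ (fi i) (γ z))) u := by rw [h]
      _ = ∑ i, ((a (γ z) i : ℂ)) * ψi i z := by
          rw [ContinuousLinearMap.sum_apply]
          exact Finset.sum_congr rfl fun i _ => by
            simp [ψi, smul_eq_mul]
  have hψD : HasFDerivAt ψ D 0 := hsum.congr_of_eventuallyEq hEq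
  have hψC : HasFDerivAt ψ ((fderiv ℂ ψ 0).restrictScalars ℝ) 0 :=
    (hψd.hasFDerivAt).restrictScalars ℝ
  have hDK : D = (fderiv ℂ ψ 0).restrictScalars ℝ := hψD.unique hψC
  -- evaluate
  have hClin : ∀ (L : ℂ →L[ℂ] ℂ) (t : ℂ), L t = t * L 1 := by
    intro L t
    conv_lhs => rw [show t = t • (1 : ℂ) by simp]
    rw [map_smul, smul_eq_mul]
  have hKt : ∀ t : ℂ, D t = t * (fderiv ℂ ψ 0 1) := by
    intro t
    rw [hDK]
    exact hClin _ t
  have hDt : ∀ t : ℂ, D t = t * (∑ i, (a b i : ℂ) * (fderiv ℂ (ψi i) 0 1))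
      + ∑ i, ((fderiv ℝ a b (t • u) i : ℂ)) * ψi i 0 := by
    intro t
    rw [hDdef, ContinuousLinearMap.sum_apply, Finset.mul_sum, ← Finset.sum_add_distrib]
    refine Finset.sum_congr rfl fun i _ => ?_
    have h1 : (ContinuousLinearMap.restrictScalars ℝ (fderiv ℂ (ψi i) 0)) t
        = t * (fderiv ℂ (ψi i) 0) 1 := by
      rw [ContinuousLinearMap.coe_restrictScalars']
      exact hClin _ t
    simp only [ContinuousLinearMap.add_apply, ContinuousLinearMap.smul_apply,
      ContinuousLinearMap.comp_apply, ContinuousLinearMap.proj_apply, h1,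
      Complex.ofRealCLM_apply, hAapp t, smul_eq_mul]
    ring
  have e1 : fderiv ℂ ψ 0 1 = (∑ i, (a b i : ℂ) * (fderiv ℂ (ψi i) 0 1))
      + ∑ i, ((fderiv ℝ a b u i : ℂ)) * ψi i 0 := by
    have := (hKt 1).symm.trans (hDt 1)
    rw [one_smul] at this
    simpa using this
  have eI : Complex.I * fderiv ℂ ψ 0 1
      = Complex.I * (∑ i, (a b i : ℂ) * (fderiv ℂ (ψi i) 0 1))
      + ∑ i, ((fderiv ℝ a b (Complex.I • u) i : ℂ)) * ψi i 0 := by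
    exact (hKt Complex.I).symm.trans (hDt Complex.I)
  have hψi0 : ∀ i, ψi i 0 = fderiv ℂ (fi i) b u := by
    intro i; simp only [ψi, hγ0]
  have goal' : ∑ i, ((fderiv ℝ a b (Complex.I • u) i : ℂ)) * ψi i 0
      = Complex.I * ∑ i, ((fderiv ℝ a b u i : ℂ)) * ψi i 0 := by
    linear_combination Complex.I * e1 - eI
  calc ∑ i, ((fderiv ℝ a b (Complex.I • u) i : ℂ)) * fderiv ℂ (fi i) b u
      = ∑ i, ((fderiv ℝ a b (Complex.I • u) i : ℂ)) * ψi i 0 := by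
        exact Finset.sum_congr rfl fun i _ => by rw [hψi0 i]
    _ = Complex.I * ∑ i, ((fderiv ℝ a b u i : ℂ)) * ψi i 0 := goal'
    _ = Complex.I * ∑ i, ((fderiv ℝ a b u i : ℂ)) * fderiv ℂ (fi i) b u := by
        rw [Finset.sum_congr rfl fun i _ => by rw [hψi0 i]]

/-- (Lemma `leker`.) Let `f, f₁, …, f_{2n}` be holomorphic on an open `V ⊆ ℂⁿ` with the
`df_i(b)` linearly independent over `ℝ` at each point, and let `a : V → ℝ^{2n}` be the unique
real-valued map with `df = Σᵢ aᵢ dfᵢ`. Then the kernel of the real derivative `da_b` is a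
complex vector subspace of `ℂⁿ`, i.e. it is stable under multiplication by `i`. -/
theorem stmt_10 {n : ℕ} {V : Set (Fin n → ℂ)} (hV : IsOpen V)
    (f : (Fin n → ℂ) → ℂ) (fi : Fin (2 * n) → (Fin n → ℂ) → ℂ)
    (hf : DifferentiableOn ℂ f V) (hfi : ∀ i, DifferentiableOn ℂ (fi i) V)
    (hindep : ∀ b ∈ V,
      LinearIndependent ℝ (fun i : Fin (2 * n) => (fderiv ℂ (fi i) b).restrictScalars ℝ))
    (a : (Fin n → ℂ) → Fin (2 * n) → ℝ)
    (ha : ∀ b ∈ V, fderiv ℂ f b = ∑ i, ((a b i : ℂ) • fderiv ℂ (fi i) b)) :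
    ∀ b ∈ V, ∀ v : Fin n → ℂ,
      fderiv ℝ a b v = 0 → fderiv ℝ a b (Complex.I • v) = 0 := by
  intro b hb v hv
  by_cases hdiff : DifferentiableAt ℝ a b
  · -- the bilinear form
    set B : (Fin n → ℂ) → (Fin n → ℂ) → ℂ := fun u w =>
      ∑ i, ((fderiv ℝ a b u i : ℂ)) * fderiv ℂ (fi i) b w with hBdef
    have hK : ∀ u, B (Complex.I • u) u = Complex.I * B u u :=
      fun u => stmt_10_key hV f fi hf hfi a ha hb hdiff u
    have Badd_left : ∀ u u' w, B (u + u') w = B u w + B u' w := by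
      intro u u' w
      rw [hBdef, ← Finset.sum_add_distrib]
      refine Finset.sum_congr rfl fun i _ => ?_
      rw [map_add]
      push_cast [Pi.add_apply]
      ring
    have Bneg_left : ∀ u w, B (-u) w = -B u w := by
      intro u w
      rw [hBdef, ← Finset.sum_neg_distrib]
      refine Finset.sum_congr rfl fun i _ => ?_
      rw [map_neg]
      push_cast [Pi.neg_apply]
      ring
    have Badd_right : ∀ u w w', B u (w + w') = B u w + B u w' := by
      intro u w w'
      rw [hBdef, ← Finset.sum_add_distrib]
      refine Finset.sum_congr rfl fun i _ => ?_
      rw [map_add]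
      ring
    have BsmulI_right : ∀ u w, B u (Complex.I • w) = Complex.I * B u w := by
      intro u w
      rw [hBdef, Finset.mul_sum]
      refine Finset.sum_congr rfl fun i _ => ?_
      rw [map_smul, smul_eq_mul]
      ring
    have P1 : ∀ u w, B (Complex.I • u) w + B (Complex.I • w) u
        = Complex.I * (B u w + B w u) := by
      intro u w
      have e := hK (u + w)
      simp only [smul_add, Badd_left, Badd_right] at e
      rw [hK u, hK w] at e
      linear_combination e
    have hlin : ∀ u w, B (Complex.I • u) w = Complex.I * B u w := by
      intro u w
      have p1 := P1 u w
      have p2 := P1 u (Complex.I • w)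
      have hw : Complex.I • (Complex.I • w) = -w := by
        rw [smul_smul, Complex.I_mul_I, neg_one_smul]
      rw [BsmulI_right, BsmulI_right, hw, Bneg_left] at p2
      have hI : Complex.I * Complex.I = -1 := Complex.I_mul_I
      linear_combination (1 / 2 : ℂ) * p1 + (-Complex.I / 2) * p2 +
        (-(B (Complex.I • u) w) / 2 + Complex.I * (B u w) / 2 + (B (Complex.I • w) u) / 2
          + B (Complex.I • u) w - B (Complex.I • w) u - Complex.I * B u w) * hI
    -- B v w = 0 for all w
    have hBv : ∀ w, B v w = 0 := by
      intro w
      rw [hBdef]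
      refine Finset.sum_eq_zero fun i _ => ?_
      rw [hv]
      simp
    have hBIv : ∀ w, B (Complex.I • v) w = 0 := by
      intro w
      rw [hlin, hBv, mul_zero]
    -- conclude by linear independence
    have hsum0 : ∑ i, (fderiv ℝ a b (Complex.I • v) i) •
        ((fderiv ℂ (fi i) b).restrictScalars ℝ) = 0 := by
      ext w
      rw [ContinuousLinearMap.sum_apply, ContinuousLinearMap.zero_apply]
      have := hBIv w
      rw [hBdef] at this
      rw [← this]
      refine Finset.sum_congr rfl fun i _ => ?_
      rw [ContinuousLinearMap.smul_apply, ContinuousLinearMap.coe_restrictScalars']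
      rw [Complex.real_smul]
    funext i
    exact Fintype.linearIndependent_iff.mp (hindep b hb) _ hsum0 i
  · rw [fderiv_zero_of_not_differentiableAt hdiff]
    rfl
end
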